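/- Let H be a complex Hilbert space with orthonormal basis (eᵢ)_{i∈ℕ}, let (λᵢ)_{i∈ℕ} be a bounded sequence of positive reals with λ₋ := inf_i λᵢ and λ₊ := sup_i λᵢ, and let A φ = Σᵢ λᵢ ⟨eᵢ, φ⟩ eᵢ. For α > 0 and φ ∈ H define the approximation error err := ‖φ‖² − ⟨φ, A(αI + A)⁻¹ φ⟩. Then err = Σᵢ (α/(α + λᵢ)) |⟨eᵢ, φ⟩|², and consequently (α/(α + λ₊)) ‖φ‖² ≤ err ≤ (α/(α + λ₋)) ‖φ‖². In particular, as λ₋ → ∞ the error tends to 0, i.e., the projection onto the graph approximates (0, φ) arbitrarily well. -/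

import Mathlib

open scoped InnerProductSpace

set_option linter.unusedSectionVars false

noncomputable section

variable {H : Type*} [NormedAddCommGroup H] [InnerProductSpace ℂ H] [CompleteSpace H]

lemma aux_term (g : ℕ → ℂ) (C : ℝ) (hC : ∀ i, ‖g i‖ ≤ C) (c : ℕ → ℂ) (i : ℕ) :
    ‖g i * c i‖ ^ (2 : ENNReal).toReal ≤ C ^ (2 : ENNReal).toReal * ‖c i‖ ^ (2 : ENNReal).toReal := by
  have hC0 : 0 ≤ C := (norm_nonneg (g 0)).trans (hC 0)
  rw [← Real.mul_rpow hC0 (norm_nonneg _)]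
  apply Real.rpow_le_rpow (norm_nonneg _) _ (by norm_num)
  calc ‖g i * c i‖ = ‖g i‖ * ‖c i‖ := norm_mul _ _
  _ ≤ C * ‖c i‖ := mul_le_mul_of_nonneg_right (hC i) (norm_nonneg _)

lemma aux_memlp (e : HilbertBasis ℕ ℂ H) (g : ℕ → ℂ) (C : ℝ) (hC : ∀ i, ‖g i‖ ≤ C)
    (ψ : H) : Memℓp (fun i => g i * e.repr ψ i) 2 := by
  apply memℓp_gen
  have hp : (0:ℝ) < (2 : ENNReal).toReal := by norm_num
  have h2 := ((lp.memℓp (e.repr ψ)).summable hp).mul_left (C ^ (2 : ENNReal).toReal)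
  exact Summable.of_nonneg_of_le (fun i => by positivity) (fun i => aux_term g C hC _ i) h2

/-- Diagonal operator with coefficients `g`, bounded by `C`. -/
def diagCLM (e : HilbertBasis ℕ ℂ H) (g : ℕ → ℂ) (C : ℝ) (hC : ∀ i, ‖g i‖ ≤ C) :
    H →L[ℂ] H :=
  LinearMap.mkContinuous
    { toFun := fun ψ => e.repr.symm ⟨fun i => g i * e.repr ψ i, aux_memlp e g C hC ψ⟩
      map_add' := by
        intro ψ χ
        dsimp only
        rw [← map_add]
        congr 1
        apply lp.ext
        funext i
        simp [lp.coeFn_add, mul_add]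
        rfl
      map_smul' := by
        intro c ψ
        dsimp only
        rw [← map_smul]
        congr 1
        apply lp.ext
        funext i
        simp [lp.coeFn_smul, map_smul]
        ring }
    C
    (by
      intro ψ
      have hC0 : 0 ≤ C := (norm_nonneg (g 0)).trans (hC 0)
      simp only [LinearMap.coe_mk, AddHom.coe_mk]
      rw [LinearIsometryEquiv.norm_map]
      have hp : (0:ℝ) < (2 : ENNReal).toReal := by norm_num
      rw [← e.repr.norm_map ψ]
      apply lp.norm_le_of_tsum_le hp (by positivity)
      have h2 := ((lp.memℓp (e.repr ψ)).summable hp).mul_left (C ^ (2 : ENNReal).toReal)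
      calc (∑' i, ‖g i * e.repr ψ i‖ ^ (2 : ENNReal).toReal)
          ≤ ∑' i, C ^ (2 : ENNReal).toReal * ‖e.repr ψ i‖ ^ (2 : ENNReal).toReal :=
            Summable.tsum_le_tsum (fun i => aux_term g C hC _ i)
              ((aux_memlp e g C hC ψ).summable hp) h2
        _ = C ^ (2 : ENNReal).toReal * ∑' i, ‖e.repr ψ i‖ ^ (2 : ENNReal).toReal := tsum_mul_left
        _ = C ^ (2 : ENNReal).toReal * ‖e.repr ψ‖ ^ (2 : ENNReal).toReal := by
            rw [← lp.norm_rpow_eq_tsum hp]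
        _ = (C * ‖e.repr ψ‖) ^ (2 : ENNReal).toReal := (Real.mul_rpow hC0 (norm_nonneg _)).symm)

lemma diag_repr (e : HilbertBasis ℕ ℂ H) (g : ℕ → ℂ) (C : ℝ) (hC : ∀ i, ‖g i‖ ≤ C)
    (ψ : H) (i : ℕ) : e.repr (diagCLM e g C hC ψ) i = g i * e.repr ψ i := by
  simp [diagCLM, LinearMap.mkContinuous_apply]

lemma diag_tsum (e : HilbertBasis ℕ ℂ H) (g : ℕ → ℂ) (C : ℝ) (hC : ∀ i, ‖g i‖ ≤ C)
    (ψ : H) : diagCLM e g C hC ψ = ∑' i, (g i * ⟪e i, ψ⟫_ℂ) • e i := by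
  have h := e.hasSum_repr_symm ⟨fun i => g i * e.repr ψ i, aux_memlp e g C hC ψ⟩
  have : diagCLM e g C hC ψ =
      e.repr.symm ⟨fun i => g i * e.repr ψ i, aux_memlp e g C hC ψ⟩ := rfl
  rw [this, ← h.tsum_eq]
  congr 1
  funext i
  rw [show (⟨fun i => g i * e.repr ψ i, aux_memlp e g C hC ψ⟩ :
    lp (fun _ : ℕ => ℂ) 2) i = g i * e.repr ψ i from rfl, e.repr_apply_apply]

end




/-- the approximation error `err = ‖φ‖² − ⟨φ, A(αI+A)⁻¹φ⟩` satisfies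
`err = Σᵢ (α/(α+λᵢ))|⟨eᵢ,φ⟩|²` and `(α/(α+λ₊))‖φ‖² ≤ err ≤ (α/(α+λ₋))‖φ‖²`. -/
theorem stmt_10
    {H : Type*} [NormedAddCommGroup H] [InnerProductSpace ℂ H] [CompleteSpace H]
    (e : HilbertBasis ℕ ℂ H) (l : ℕ → ℝ) (hl : ∀ i, 0 < l i)
    (hbd : ∃ C : ℝ, ∀ i, l i ≤ C)
    (A : H →L[ℂ] H)
    (hA : ∀ φ : H, A φ = ∑' i, ((l i : ℂ) * ⟪e i, φ⟫_ℂ) • e i)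
    (α : ℝ) (hα : 0 < α) (φ : H)
    (err : ℝ)
    (herr : err = ‖φ‖ ^ 2
      - (⟪φ, A (Ring.inverse ((α : ℂ) • (1 : H →L[ℂ] H) + A) φ)⟫_ℂ).re) :
    err = ∑' i, (α / (α + l i)) * ‖⟪e i, φ⟫_ℂ‖ ^ 2 ∧
    (α / (α + ⨆ i, l i)) * ‖φ‖ ^ 2 ≤ err ∧
    err ≤ (α / (α + ⨅ i, l i)) * ‖φ‖ ^ 2 := by
  obtain ⟨C0, hC0⟩ := hbd
  have hα' : ∀ i, (0:ℝ) < α + l i := fun i => add_pos hα (hl i)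
  have hlC : ∀ i, ‖((l i : ℝ) : ℂ)‖ ≤ C0 := by
    intro i
    rw [Complex.norm_real, Real.norm_eq_abs, abs_of_pos (hl i)]
    exact hC0 i
  have hAdiag : A = diagCLM e (fun i => ((l i : ℝ) : ℂ)) C0 hlC := by
    refine ContinuousLinearMap.ext fun ψ => ?_
    rw [hA, diag_tsum]
  have hgC : ∀ i, ‖(((α + l i)⁻¹ : ℝ) : ℂ)‖ ≤ α⁻¹ := by
    intro i
    rw [Complex.norm_real, Real.norm_eq_abs, abs_of_pos (inv_pos.mpr (hα' i))]
    exact inv_anti₀ hα (le_add_of_nonneg_right (hl i).le)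
  set T := diagCLM e (fun i => (((α + l i)⁻¹ : ℝ) : ℂ)) α⁻¹ hgC with hT
  set B := (α : ℂ) • (1 : H →L[ℂ] H) + A with hBdef
  have hTc : ∀ ψ i, e.repr (T ψ) i = (((α + l i)⁻¹ : ℝ) : ℂ) * e.repr ψ i :=
    fun ψ i => diag_repr e _ α⁻¹ hgC ψ i
  have hAc : ∀ ψ i, e.repr (A ψ) i = ((l i : ℝ) : ℂ) * e.repr ψ i := by
    intro ψ i
    rw [hAdiag]
    exact diag_repr e _ C0 hlC ψ i
  have hBc : ∀ ψ i, e.repr (B ψ) i = ((α + l i : ℝ) : ℂ) * e.repr ψ i := by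
    intro ψ i
    rw [hBdef]
    simp only [ContinuousLinearMap.add_apply, ContinuousLinearMap.coe_smul',
      Pi.smul_apply, ContinuousLinearMap.one_apply, map_add, map_smul,
      lp.coeFn_add, Pi.add_apply, lp.coeFn_smul, Pi.smul_apply, hAc]
    rw [smul_eq_mul]
    push_cast
    ring
  have hne : ∀ i, ((α + l i : ℝ) : ℂ) ≠ 0 := by
    intro i
    exact_mod_cast (hα' i).ne'
  have hBT : B * T = 1 := by
    refine ContinuousLinearMap.ext fun ψ => ?_
    apply e.repr.injective
    apply lp.ext
    funext i
    rw [show (B * T) ψ = B (T ψ) from rfl, hBc, hTc, ContinuousLinearMap.one_apply,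
      ← mul_assoc, ← Complex.ofReal_mul, mul_inv_cancel₀ (hα' i).ne', Complex.ofReal_one, one_mul]
  have hTB : T * B = 1 := by
    refine ContinuousLinearMap.ext fun ψ => ?_
    apply e.repr.injective
    apply lp.ext
    funext i
    rw [show (T * B) ψ = T (B ψ) from rfl, hTc, hBc, ContinuousLinearMap.one_apply,
      ← mul_assoc, ← Complex.ofReal_mul, inv_mul_cancel₀ (hα' i).ne', Complex.ofReal_one, one_mul]
  have hunit : Ring.inverse B = T := Ring.inverse_unit (⟨B, T, hBT, hTB⟩ : (H →L[ℂ] H)ˣ)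
  rw [hunit] at herr
  set c : ℕ → ℂ := fun i => ⟪e i, φ⟫_ℂ with hc
  have hrc : ∀ i, e.repr φ i = c i := fun i => e.repr_apply_apply φ i
  have hsq : ∀ z : ℂ, (starRingEnd ℂ) z * z = ((‖z‖ ^ 2 : ℝ) : ℂ) := by
    intro z
    rw [mul_comm, Complex.mul_conj]
    norm_cast
    rw [Complex.normSq_eq_norm_sq]
  have hS2 : HasSum (fun i => ‖c i‖ ^ 2) (‖φ‖ ^ 2) := by
    have h := (e.hasSum_inner_mul_inner φ φ).mapL Complex.reCLM
    have h2 : Complex.reCLM ⟪φ, φ⟫_ℂ = ‖φ‖ ^ 2 := by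
      simpa using (inner_self_eq_norm_sq (𝕜 := ℂ) φ)
    rw [h2] at h
    refine h.congr_fun fun i => ?_
    show ‖c i‖ ^ 2 = (⟪φ, (e : ℕ → H) i⟫_ℂ * ⟪(e : ℕ → H) i, φ⟫_ℂ).re
    rw [← inner_conj_symm φ ((e : ℕ → H) i), hsq, Complex.ofReal_re]
  have hterm : ∀ i, ⟪e i, A (T φ)⟫_ℂ = ((l i / (α + l i) : ℝ) : ℂ) * c i := by
    intro i
    rw [← e.repr_apply_apply, hAc, hTc, hrc, ← mul_assoc, ← Complex.ofReal_mul,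
      div_eq_mul_inv]
  have hS1 : HasSum (fun i => (l i / (α + l i)) * ‖c i‖ ^ 2) ((⟪φ, A (T φ)⟫_ℂ).re) := by
    have h := (e.hasSum_inner_mul_inner φ (A (T φ))).mapL Complex.reCLM
    refine h.congr_fun fun i => ?_
    show l i / (α + l i) * ‖c i‖ ^ 2
      = (⟪φ, (e : ℕ → H) i⟫_ℂ * ⟪(e : ℕ → H) i, A (T φ)⟫_ℂ).re
    rw [hterm i, ← inner_conj_symm φ ((e : ℕ → H) i)]
    have heq : (starRingEnd ℂ) (c i) * (((l i / (α + l i) : ℝ) : ℂ) * c i)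
        = ((l i / (α + l i) : ℝ) : ℂ) * ((starRingEnd ℂ) (c i) * c i) := by ring
    rw [heq, hsq, ← Complex.ofReal_mul, Complex.ofReal_re]
  have hE : HasSum (fun i => (α / (α + l i)) * ‖c i‖ ^ 2) err := by
    have h := hS2.sub hS1
    rw [← herr] at h
    refine h.congr_fun fun i => ?_
    show α / (α + l i) * ‖c i‖ ^ 2 = ‖c i‖ ^ 2 - l i / (α + l i) * ‖c i‖ ^ 2
    have hne := (hα' i).ne'
    field_simp
    ring
  refine ⟨hE.tsum_eq.symm, ?_, ?_⟩
  · have hbddA : BddAbove (Set.range l) := ⟨C0, by rintro x ⟨i, rfl⟩; exact hC0 i⟩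
    refine hasSum_le (fun i => ?_) (hS2.mul_left (α / (α + ⨆ j, l j))) hE
    have h1 : l i ≤ ⨆ j, l j := le_ciSup hbddA i
    have h2 : (0:ℝ) < α + l i := hα' i
    gcongr
  · have hbddB : BddBelow (Set.range l) := ⟨0, by rintro x ⟨i, rfl⟩; exact (hl i).le⟩
    have hinf0 : (0:ℝ) ≤ ⨅ j, l j := le_ciInf fun i => (hl i).le
    refine hasSum_le (fun i => ?_) hE (hS2.mul_left (α / (α + ⨅ j, l j)))
    have h1 : ⨅ j, l j ≤ l i := ciInf_le hbddB i
    have h2 : (0:ℝ) < α + ⨅ j, l j := by positivity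
    gcongr
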